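/- For every natural number n, ∑_{k=0}^{⌊n/2⌋} C(n,2k)·C(2k,k)·(2x+1)^{n−2k}·(x(x+1))^k = D_n(x) as polynomials in x, where D_n(x) = ∑_{k=0}^n C(n,k)² x^k (x+1)^{n−k}. -/

import Mathlib

open Finset Polynomial

lemma delannoy_aux_choose (n j i : ℕ) (h : 2 * j + i ≤ n) :
    n.choose (2 * j) * (2 * j).choose j * (n - 2 * j).choose i
      = n.choose (i + j) * ((i + j).choose j * (n - (i + j)).choose j) := by
  have hpos : 0 < Nat.factorial j * Nat.factorial j * Nat.factorial i *
      Nat.factorial (n - 2 * j - i) := by positivity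
  apply Nat.eq_of_mul_eq_mul_right hpos
  have A := Nat.choose_mul_factorial_mul_factorial (show 2 * j ≤ n by omega)
  have B := Nat.choose_mul_factorial_mul_factorial (show j ≤ 2 * j by omega)
  rw [show 2 * j - j = j by omega] at B
  have C' := Nat.choose_mul_factorial_mul_factorial (show i ≤ n - 2 * j by omega)
  have D := Nat.choose_mul_factorial_mul_factorial (show j ≤ i + j by omega)
  rw [show i + j - j = i by omega] at D
  have E := Nat.choose_mul_factorial_mul_factorial (show j ≤ n - (i + j) by omega)
  rw [show n - (i + j) - j = n - 2 * j - i by omega] at E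
  have F := Nat.choose_mul_factorial_mul_factorial (show i + j ≤ n by omega)
  calc n.choose (2 * j) * (2 * j).choose j * (n - 2 * j).choose i *
        (Nat.factorial j * Nat.factorial j * Nat.factorial i * Nat.factorial (n - 2 * j - i))
      = n.choose (2 * j) * ((2 * j).choose j * Nat.factorial j * Nat.factorial j) *
        ((n - 2 * j).choose i * Nat.factorial i * Nat.factorial (n - 2 * j - i)) := by ring
    _ = n.choose (2 * j) * Nat.factorial (2 * j) * Nat.factorial (n - 2 * j) := by rw [B, C']
    _ = Nat.factorial n := A
    _ = n.choose (i + j) * Nat.factorial (i + j) * Nat.factorial (n - (i + j)) := F.symm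
    _ = n.choose (i + j) * ((i + j).choose j * Nat.factorial j * Nat.factorial i) *
        ((n - (i + j)).choose j * Nat.factorial j * Nat.factorial (n - 2 * j - i)) := by
          rw [D, E]
    _ = n.choose (i + j) * ((i + j).choose j * (n - (i + j)).choose j) *
        (Nat.factorial j * Nat.factorial j * Nat.factorial i *
          Nat.factorial (n - 2 * j - i)) := by ring

lemma delannoy_vand (n k : ℕ) (hk : k ≤ n) :
    ∑ j ∈ range (min k (n - k) + 1), k.choose j * (n - k).choose j = n.choose k := by
  have h := Nat.add_choose_eq k (n - k) (n - k)
  rw [Nat.add_sub_cancel' hk, Nat.choose_symm hk,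
    Finset.Nat.sum_antidiagonal_eq_sum_range_succ_mk] at h
  rw [h]
  have h2 : ∑ p ∈ range ((n - k).succ), k.choose p * (n - k).choose (n - k - p)
      = ∑ p ∈ range ((n - k).succ), k.choose p * (n - k).choose p := by
    refine Finset.sum_congr rfl fun x hx => ?_
    rw [Nat.choose_symm (show x ≤ n - k by simp only [mem_range] at hx; omega)]
  rw [show (∑ p ∈ range ((n - k).succ),
      k.choose (p, n - k - p).1 * (n - k).choose (p, n - k - p).2)
      = ∑ p ∈ range ((n - k).succ), k.choose p * (n - k).choose (n - k - p) from rfl, h2]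
  apply Finset.sum_subset
  · intro x hx
    simp only [mem_range, Nat.lt_succ_iff, le_min_iff] at hx ⊢
    omega
  · intro x hx hx'
    simp only [mem_range, Nat.lt_succ_iff, le_min_iff] at hx hx'
    have : k < x := by omega
    simp [Nat.choose_eq_zero_of_lt this]

lemma delannoy_key {R : Type*} [CommRing R] (a b : R) (n : ℕ) :
    ∑ j ∈ range (n / 2 + 1),
        ((n.choose (2 * j) * (2 * j).choose j : ℕ) : R) * (a + b) ^ (n - 2 * j) * (a * b) ^ j
      = ∑ k ∈ range (n + 1), ((n.choose k : ℕ) : R) ^ 2 * a ^ k * b ^ (n - k) := by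
  have step1 : ∑ j ∈ range (n / 2 + 1),
      ((n.choose (2 * j) * (2 * j).choose j : ℕ) : R) * (a + b) ^ (n - 2 * j) * (a * b) ^ j
      = ∑ j ∈ range (n / 2 + 1), ∑ i ∈ range (n - 2 * j + 1),
        ((n.choose (2 * j) * ((2 * j).choose j * (n - 2 * j).choose i) : ℕ) : R)
          * a ^ (i + j) * b ^ (n - j - i) := by
    refine Finset.sum_congr rfl fun j hj => ?_
    have h2j : 2 * j ≤ n := by
      have := Finset.mem_range.1 hj; omega
    rw [add_pow, Finset.mul_sum, Finset.sum_mul]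
    refine Finset.sum_congr rfl fun i hi => ?_
    have hi' : i ≤ n - 2 * j := by have := Finset.mem_range.1 hi; omega
    rw [show n - j - i = n - 2 * j - i + j by omega]
    push_cast
    ring
  rw [step1]
  have step2 : ∑ j ∈ range (n / 2 + 1), ∑ i ∈ range (n - 2 * j + 1),
        ((n.choose (2 * j) * ((2 * j).choose j * (n - 2 * j).choose i) : ℕ) : R)
          * a ^ (i + j) * b ^ (n - j - i)
      = ∑ k ∈ range (n + 1), ∑ j ∈ range (min k (n - k) + 1),
        ((n.choose k * (k.choose j * (n - k).choose j) : ℕ) : R) * a ^ k * b ^ (n - k) := by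
    rw [Finset.sum_sigma', Finset.sum_sigma']
    apply Finset.sum_nbij' (i := fun p => ⟨p.2 + p.1, p.1⟩) (j := fun p => ⟨p.2, p.1 - p.2⟩)
    · rintro ⟨j, i⟩ hp
      simp only [Finset.mem_sigma, Finset.mem_range, Nat.lt_succ_iff, le_min_iff] at hp ⊢
      omega
    · rintro ⟨k, j⟩ hp
      simp only [Finset.mem_sigma, Finset.mem_range, Nat.lt_succ_iff, le_min_iff] at hp ⊢
      omega
    · rintro ⟨j, i⟩ hp
      simp
    · rintro ⟨k, j⟩ hp
      simp only [Finset.mem_sigma, Finset.mem_range, Nat.lt_succ_iff, le_min_iff] at hp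
      have hkj : k - j + j = k := by omega
      simp [hkj]
    · rintro ⟨j, i⟩ hp
      simp only [Finset.mem_sigma, Finset.mem_range, Nat.lt_succ_iff, le_min_iff] at hp
      have h : 2 * j + i ≤ n := by omega
      have e := delannoy_aux_choose n j i h
      rw [mul_assoc] at e
      rw [e, show n - j - i = n - (i + j) by omega]
  rw [step2]
  refine Finset.sum_congr rfl fun k hk => ?_
  have hk' : k ≤ n := by have := Finset.mem_range.1 hk; omega
  rw [← Finset.sum_mul, ← Finset.sum_mul, ← Nat.cast_sum, ← Finset.mul_sum,
    delannoy_vand n k hk', ← sq]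
  push_cast
  ring

theorem delannoy_trinomial_form (n : ℕ) :
    (∑ k ∈ range (n / 2 + 1),
        C ((n.choose (2 * k) : ℤ) * ((2 * k).choose k : ℤ)) *
          (2 * X + 1) ^ (n - 2 * k) * (X * (X + 1)) ^ k) =
    ∑ k ∈ range (n + 1), C ((n.choose k : ℤ))^2 * X ^ k * (X + 1) ^ (n - k) := by
  have h := delannoy_key (R := Polynomial ℤ) X (X + 1) n
  simp only [Nat.cast_mul] at h
  simp only [map_mul, map_natCast]
  rw [show (2 * X + 1 : Polynomial ℤ) = X + (X + 1) by ring]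
  exact h
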